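/- Let K be a field of characteristic zero, n ∈ ℕ, k ∈ {1,…,n}, and v_j = Σ_{i=1}^n i^j x_i ∈ K[x_1,…,x_n] for j ∈ {1,…,n−k}. Then for every subset S ⊆ {1,…,n} with |S| = k, the set {x_i : i ∈ S} ∪ {v_1,…,v_{n−k}} is a K-basis of the space of homogeneous polynomials of degree one in K[x_1,…,x_n]. -/

import Mathlib

open MvPolynomial

/-- The linear form `v_j = ∑_{i=1}^n i^j x_i`. -/
noncomputable def vlin (K : Type*) [Field K] (n j : ℕ) : MvPolynomial (Fin n) K :=
  ∑ i : Fin n, C ((((i : ℕ) + 1) ^ j : ℕ) : K) * X i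

section Aux

variable {K : Type*} [Field K]

/-- The linear map sending coefficient vectors to linear forms. -/
noncomputable def Llin (K : Type*) [Field K] (n : ℕ) :
    (Fin n → K) →ₗ[K] MvPolynomial (Fin n) K where
  toFun c := ∑ i, c i • X i
  map_add' c d := by simp [add_smul, Finset.sum_add_distrib]
  map_smul' a c := by simp [smul_smul, Finset.smul_sum]

lemma Llin_single (n : ℕ) (i : Fin n) :
    Llin K n (Pi.single i 1) = X i := by
  simp only [Llin, LinearMap.coe_mk, AddHom.coe_mk]
  rw [Finset.sum_eq_single i]
  · simp
  · intro j _ hj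
    simp [Pi.single_apply, hj]
  · simp

lemma coeff_Llin (n : ℕ) (c : Fin n → K) (i : Fin n) :
    coeff (Finsupp.single i 1) (Llin K n c) = c i := by
  simp only [Llin, LinearMap.coe_mk, AddHom.coe_mk, coeff_sum, coeff_smul, coeff_X']
  rw [Finset.sum_eq_single i]
  · simp
  · intro j _ hj
    have : Finsupp.single j (1 : ℕ) ≠ Finsupp.single i 1 := by
      simpa [Finsupp.single_left_inj (one_ne_zero)] using hj
    simp [this]
  · simp

lemma Llin_injective (n : ℕ) : Function.Injective (Llin K n) := by
  intro c d h
  funext i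
  rw [← coeff_Llin n c i, ← coeff_Llin n d i, h]

lemma range_Llin (n : ℕ) :
    LinearMap.range (Llin K n) =
      Submodule.span K (Set.range (X : Fin n → MvPolynomial (Fin n) K)) := by
  apply le_antisymm
  · rintro x hx
    obtain ⟨c, rfl⟩ := hx
    show (∑ i, c i • X i) ∈ _
    exact Submodule.sum_mem _ fun i _ =>
      Submodule.smul_mem _ _ (Submodule.subset_span (Set.mem_range_self i))
  · rw [Submodule.span_le]
    rintro _ ⟨i, rfl⟩
    simp only [SetLike.mem_coe, LinearMap.mem_range]
    exact ⟨Pi.single i 1, Llin_single n i⟩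

lemma span_range_X (n : ℕ) :
    Submodule.span K (Set.range (X : Fin n → MvPolynomial (Fin n) K)) =
      homogeneousSubmodule (Fin n) K 1 := by
  apply le_antisymm
  · rw [Submodule.span_le]
    rintro _ ⟨i, rfl⟩
    exact isHomogeneous_X K i
  · intro p hp
    rw [mem_homogeneousSubmodule] at hp
    rw [show p = ∑ d ∈ p.support, monomial d (coeff d p) from (support_sum_monomial_coeff p).symm]
    apply Submodule.sum_mem
    intro d hd
    have hdeg : d.degree = 1 := by
      have := hp (mem_support_iff.mp hd)
      rwa [Finsupp.degree_eq_weight_one]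
    obtain ⟨i, rfl⟩ : ∃ i, d = Finsupp.single i 1 := by
      have hne : d ≠ 0 := by
        intro h
        rw [h, map_zero] at hdeg
        exact one_ne_zero hdeg.symm
      obtain ⟨i, hi⟩ := Finsupp.ne_iff.mp hne
      simp only [Finsupp.coe_zero, Pi.zero_apply] at hi
      have hdi1 : d i = 1 := le_antisymm (hdeg ▸ Finsupp.le_degree i d) (Nat.one_le_iff_ne_zero.mpr hi)
      refine ⟨i, Finsupp.ext fun j => ?_⟩
      rcases eq_or_ne j i with rfl | hj
      · simp [hdi1]
      · simp only [Finsupp.single_apply, if_neg (Ne.symm hj)]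
        by_contra hdj
        have hij : i ≠ j := Ne.symm hj
        have hsub : ({i, j} : Finset (Fin n)) ⊆ d.support := by
          intro s hs
          simp only [Finset.mem_insert, Finset.mem_singleton] at hs
          rcases hs with rfl | rfl
          · exact Finsupp.mem_support_iff.mpr hi
          · exact Finsupp.mem_support_iff.mpr hdj
        have h2 : 2 ≤ d.degree := by
          have : d i + d j ≤ ∑ s ∈ d.support, d s := by
            rw [← Finset.sum_pair hij]
            exact Finset.sum_le_sum_of_subset hsub
          have hdj1 : 1 ≤ d j := Nat.one_le_iff_ne_zero.mpr hdj
          calc 2 = 1 + 1 := rfl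
            _ ≤ d i + d j := add_le_add hdi1.ge hdj1
            _ ≤ ∑ s ∈ d.support, d s := this
            _ = d.degree := rfl
        omega
    have : (monomial (Finsupp.single i 1)) (coeff (Finsupp.single i 1) p) =
        (coeff (Finsupp.single i 1) p) • X i := by
      rw [smul_eq_C_mul, X, C_mul_monomial, mul_one]
    rw [this]
    exact Submodule.smul_mem _ _ (Submodule.subset_span ⟨i, rfl⟩)

end Aux

/-- for every `k`-element subset `S ⊆ {1,…,n}`, the family
`{x_i : i ∈ S} ∪ {v_1, …, v_{n-k}}` is a `K`-basis of the space of
homogeneous polynomials of degree one. -/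
theorem vars_union_vlin_basis {K : Type*} [Field K] [CharZero K] (n k : ℕ)
    (hk1 : 1 ≤ k) (hkn : k ≤ n) (S : Finset (Fin n)) (hS : S.card = k) :
    LinearIndependent K
      (fun p : ↥S ⊕ Fin (n - k) =>
        Sum.elim (fun i : ↥S => (X (i : Fin n) : MvPolynomial (Fin n) K))
          (fun j : Fin (n - k) => vlin K n ((j : ℕ) + 1)) p) ∧
    Submodule.span K
      (Set.range
        (Sum.elim (fun i : ↥S => (X (i : Fin n) : MvPolynomial (Fin n) K))
          (fun j : Fin (n - k) => vlin K n ((j : ℕ) + 1)))) =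
      homogeneousSubmodule (Fin n) K 1 := by
  classical
  -- the columns of the coefficient matrix
  set col : ↥S ⊕ Fin (n - k) → (Fin n → K) :=
    Sum.elim (fun s : ↥S => Pi.single (s : Fin n) (1 : K))
      (fun j : Fin (n - k) => fun i : Fin n => (((i : ℕ) + 1 : ℕ) : K) ^ ((j : ℕ) + 1)) with hcol
  have hLcol : ∀ p, Llin K n (col p) =
      Sum.elim (fun i : ↥S => (X (i : Fin n) : MvPolynomial (Fin n) K))
        (fun j : Fin (n - k) => vlin K n ((j : ℕ) + 1)) p := by
    rintro (s | j)
    · exact Llin_single n s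
    · simp only [hcol, Sum.elim_inr, vlin, Llin, LinearMap.coe_mk, AddHom.coe_mk]
      refine Finset.sum_congr rfl fun i _ => ?_
      rw [smul_eq_C_mul]
      push_cast
      ring_nf
  -- linear independence of the columns
  have hindep : LinearIndependent K col := by
    rw [Fintype.linearIndependent_iff]
    intro g hg
    have hgi : ∀ i : Fin n,
        (∑ s : ↥S, g (Sum.inl s) • (Pi.single (s : Fin n) (1 : K) : Fin n → K) i) +
        (∑ j : Fin (n - k), g (Sum.inr j) * (((i : ℕ) + 1 : ℕ) : K) ^ ((j : ℕ) + 1)) = 0 := by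
      intro i
      have := congrFun hg i
      simpa [hcol, Fintype.sum_sum_type, Finset.sum_apply, Pi.smul_apply, smul_eq_mul]
        using this
    -- first: the coefficients of the `v_j` vanish, by a polynomial root count
    have hb : ∀ j : Fin (n - k), g (Sum.inr j) = 0 := by
      set q : Polynomial K :=
        ∑ j : Fin (n - k), Polynomial.C (g (Sum.inr j)) * Polynomial.X ^ (j : ℕ) with hq
      have hqcoeff : ∀ j : Fin (n - k), q.coeff (j : ℕ) = g (Sum.inr j) := by
        intro j
        rw [hq, Polynomial.finset_sum_coeff]
        rw [Finset.sum_eq_single j]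
        · simp
        · intro j' _ hj'
          have : (j' : ℕ) ≠ (j : ℕ) := fun h => hj' (Fin.ext h)
          simp [Polynomial.coeff_X_pow, this, Ne.symm this]
        · simp
      have hqzero : q = 0 := by
        rcases Nat.eq_zero_or_pos (n - k) with h0 | hnk
        · rw [hq]
          apply Finset.sum_eq_zero
          intro j _
          exact absurd (j.2.trans_eq h0) (Nat.not_lt_zero _)
        · have hdeg : q.natDegree ≤ n - k - 1 := by
            apply Polynomial.natDegree_sum_le_of_forall_le
            intro j _
            calc (Polynomial.C (g (Sum.inr j)) * Polynomial.X ^ (j : ℕ)).natDegree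
                ≤ (Polynomial.X ^ (j : ℕ) : Polynomial K).natDegree :=
                  Polynomial.natDegree_C_mul_le _ _
              _ ≤ n - k - 1 := by rw [Polynomial.natDegree_X_pow]; omega
          have hcard : Fintype.card ↥(Sᶜ : Finset (Fin n)) = n - k := by
            rw [Fintype.card_coe, Finset.card_compl, Fintype.card_fin, hS]
          refine Polynomial.eq_zero_of_natDegree_lt_card_of_eval_eq_zero q
            (f := fun i : ↥(Sᶜ : Finset (Fin n)) => (((i : Fin n) : ℕ) + 1 : K)) ?_ ?_ ?_
          · intro a b hab
            have h1 : (((a : Fin n) : ℕ) : K) = (((b : Fin n) : ℕ) : K) :=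
              add_right_cancel hab
            exact Subtype.ext (Fin.ext (by exact_mod_cast h1))
          · rintro ⟨i, hi⟩
            have hi' : (i : Fin n) ∉ S := Finset.mem_compl.mp hi
            have h1 : ∑ s : ↥S, g (Sum.inl s) • (Pi.single (s : Fin n) (1 : K) : Fin n → K) i
                = 0 := by
              apply Finset.sum_eq_zero
              intro s _
              have : i ≠ (s : Fin n) := fun h => hi' (h ▸ s.2)
              simp [Pi.single_apply, this]
            have h2 := hgi i
            rw [h1, zero_add] at h2
            have h3 : (((i : ℕ) + 1 : K)) * q.eval (((i : ℕ) + 1 : K)) = 0 := by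
              rw [hq]
              simp only [Polynomial.eval_finset_sum, Polynomial.eval_mul, Polynomial.eval_C,
                Polynomial.eval_pow, Polynomial.eval_X, Finset.mul_sum]
              rw [← h2]
              refine Finset.sum_congr rfl fun j _ => ?_
              push_cast
              ring
            have h4 : (((i : ℕ) + 1 : K)) ≠ 0 := by norm_cast
            have := mul_eq_zero.mp h3
            tauto
          · calc q.natDegree ≤ n - k - 1 := hdeg
              _ < n - k := by omega
              _ = Fintype.card ↥(Sᶜ : Finset (Fin n)) := hcard.symm
      intro j
      rw [← hqcoeff j, hqzero, Polynomial.coeff_zero]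
    -- second: the coefficients of the `x_i`, `i ∈ S`, vanish
    have ha : ∀ s : ↥S, g (Sum.inl s) = 0 := by
      intro s
      have h2 := hgi (s : Fin n)
      simp only [hb, zero_mul, Finset.sum_const_zero, add_zero] at h2
      rw [Finset.sum_eq_single s] at h2
      · simpa using h2
      · intro s' _ hs'
        have : ((s : Fin n) : Fin n) ≠ (s' : Fin n) := by
          exact fun h => hs' (Subtype.ext h.symm)
        simp [Pi.single_apply, this]
      · simp
    rintro (s | j)
    · exact ha s
    · exact hb j
  -- the columns span everything by cardinality
  have hcard : Fintype.card (↥S ⊕ Fin (n - k)) = Module.finrank K (Fin n → K) := by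
    rw [Module.finrank_pi, Fintype.card_sum, Fintype.card_coe, Fintype.card_fin,
      Fintype.card_fin, hS]
    omega
  have hspan : Submodule.span K (Set.range col) = ⊤ :=
    hindep.span_eq_top_of_card_eq_finrank' hcard
  have hker : LinearMap.ker (Llin K n) = ⊥ :=
    LinearMap.ker_eq_bot.mpr (Llin_injective n)
  constructor
  · have := hindep.map' (Llin K n) hker
    convert this using 1
    · funext p
      exact (hLcol p).symm
    all_goals rfl
  · have hrange : Set.range
        (Sum.elim (fun i : ↥S => (X (i : Fin n) : MvPolynomial (Fin n) K))
          (fun j : Fin (n - k) => vlin K n ((j : ℕ) + 1))) =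
        (Llin K n) '' Set.range col := by
      have hfeq : (Sum.elim (fun i : ↥S => (X (i : Fin n) : MvPolynomial (Fin n) K))
          (fun j : Fin (n - k) => vlin K n ((j : ℕ) + 1))) = (Llin K n) ∘ col :=
        funext fun p => (hLcol p).symm
      rw [hfeq, Set.range_comp]
    rw [hrange, ← Submodule.map_span, hspan, Submodule.map_top, range_Llin, span_range_X]
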